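/- Fix h : ℕ and naturals a, b with a < b ≤ 2^h. The canonical partition CP_h(a, b) is a partition of {m ∈ ℕ : a ≤ m < b}: the segments seg_h(u) for u ∈ CP_h(a, b) are pairwise disjoint, and every natural number m with a ≤ m < b lies in seg_h(u) for exactly one u ∈ CP_h(a, b). -/

import Mathlib

/-- The value of a bitstring (most significant bit first):
`val [] = 0` and `val (u ++ [b]) = 2 * val u + (if b then 1 else 0)`. -/
def bitVal (u : List Bool) : ℕ :=
  u.foldl (fun n b => 2 * n + (if b then 1 else 0)) 0

/-- The segment of a bitstring `u` (with `|u| ≤ h`) in the perfect segment tree of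
height `h`: `seg_h(u) = {m : val u · 2^(h−|u|) ≤ m < (val u + 1) · 2^(h−|u|)}`. -/
def seg (h : ℕ) (u : List Bool) : Set ℕ :=
  {m | bitVal u * 2 ^ (h - u.length) ≤ m ∧ m < (bitVal u + 1) * 2 ^ (h - u.length)}

/-- The canonical partition `CP_h(a, b)` of the interval `{m : a ≤ m < b}` in the
perfect segment tree of height `h`: the bitstrings `u` with `|u| ≤ h` whose segment is
contained in `[a, b)` and such that no proper prefix of `u` has its segment contained
in `[a, b)`. -/
def CP (h a b : ℕ) : Set (List Bool) :=
  {u | u.length ≤ h ∧ seg h u ⊆ Set.Ico a b ∧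
    ∀ u' : List Bool, u' <+: u → u' ≠ u → ¬ seg h u' ⊆ Set.Ico a b}

lemma bitVal_append_bit (u : List Bool) (b : Bool) :
    bitVal (u ++ [b]) = 2 * bitVal u + (if b then 1 else 0) := by
  simp [bitVal, List.foldl_append]

lemma bitVal_lt (u : List Bool) : bitVal u < 2 ^ u.length := by
  induction u using List.reverseRecOn with
  | nil => simp [bitVal]
  | append_singleton u b ih =>
    rw [bitVal_append_bit]
    simp only [List.length_append, List.length_singleton, pow_succ]
    cases b <;> simp <;> omega

lemma bitVal_append (u w : List Bool) :
    bitVal (u ++ w) = bitVal u * 2 ^ w.length + bitVal w := by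
  induction w using List.reverseRecOn with
  | nil => simp [bitVal]
  | append_singleton w c ih =>
    rw [← List.append_assoc, bitVal_append_bit, bitVal_append_bit, ih]
    simp only [List.length_append, List.length_singleton, pow_succ]
    ring

lemma bitVal_inj : ∀ u v : List Bool, u.length = v.length → bitVal u = bitVal v → u = v := by
  intro u
  induction u using List.reverseRecOn with
  | nil => intro v hl _; exact (List.eq_nil_of_length_eq_zero hl.symm).symm
  | append_singleton u b ih =>
    intro v hl hv
    induction v using List.reverseRecOn with
    | nil => simp at hl
    | append_singleton v c _ =>
      rw [bitVal_append_bit, bitVal_append_bit] at hv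
      simp only [List.length_append, List.length_singleton] at hl
      have hbc : b = c ∧ bitVal u = bitVal v := by
        cases b <;> cases c <;> simp at hv ⊢ <;> omega
      rw [ih v (by omega) hbc.2, hbc.1]

/-- segments shrink along prefixes -/
lemma seg_subset_of_prefix {h : ℕ} {u v : List Bool} (huv : u <+: v) (hv : v.length ≤ h) :
    seg h v ⊆ seg h u := by
  obtain ⟨w, rfl⟩ := huv
  intro m hm
  obtain ⟨h1, h2⟩ := hm
  rw [bitVal_append] at h1 h2
  have hlen : h - u.length = (h - (u ++ w).length) + w.length := by
    simp only [List.length_append] at hv ⊢; omega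
  have hw := bitVal_lt w
  constructor
  · calc bitVal u * 2 ^ (h - u.length)
        = bitVal u * 2 ^ w.length * 2 ^ (h - (u ++ w).length) := by
          rw [hlen, pow_add]; ring
      _ ≤ (bitVal u * 2 ^ w.length + bitVal w) * 2 ^ (h - (u ++ w).length) := by
          exact Nat.mul_le_mul_right _ (Nat.le_add_right _ _)
      _ ≤ m := h1
  · calc m < (bitVal u * 2 ^ w.length + bitVal w + 1) * 2 ^ (h - (u ++ w).length) := h2
      _ ≤ ((bitVal u + 1) * 2 ^ w.length) * 2 ^ (h - (u ++ w).length) := by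
          apply Nat.mul_le_mul_right
          have : bitVal w + 1 ≤ 2 ^ w.length := hw
          nlinarith
      _ = (bitVal u + 1) * 2 ^ (h - u.length) := by rw [hlen, pow_add]; ring

lemma bitVal_eq_div {h : ℕ} {u : List Bool} {m : ℕ} (hu : u.length ≤ h) (hm : m ∈ seg h u) :
    bitVal u = m / 2 ^ (h - u.length) := by
  obtain ⟨h1, h2⟩ := hm
  symm
  exact Nat.div_eq_of_lt_le h1 h2

/-- comparability: two segments containing a common point are nested -/
lemma prefix_of_mem_seg {h : ℕ} {u v : List Bool} {m : ℕ}
    (hu : u.length ≤ h) (hv : v.length ≤ h) (hlen : u.length ≤ v.length)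
    (hmu : m ∈ seg h u) (hmv : m ∈ seg h v) : u <+: v := by
  have htake : v.take u.length <+: v := List.take_prefix _ _
  have hlt : (v.take u.length).length = u.length := by
    rw [List.length_take]; omega
  suffices hh : u = v.take u.length by rw [hh]; exact htake
  apply bitVal_inj _ _ (by omega)
  -- bitVal (v.take u.length) = bitVal v / 2 ^ (v.length - u.length)
  have hsplit : v = v.take u.length ++ v.drop u.length := (List.take_append_drop _ _).symm
  have hdroplen : (v.drop u.length).length = v.length - u.length := List.length_drop
  have hval : bitVal v = bitVal (v.take u.length) * 2 ^ (v.length - u.length) + bitVal (v.drop u.length) := by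
    conv_lhs => rw [hsplit]
    rw [bitVal_append, hdroplen]
  have hvd : bitVal v / 2 ^ (v.length - u.length) = bitVal (v.take u.length) := by
    rw [hval, mul_comm, Nat.mul_add_div (pow_pos (by norm_num) _),
      Nat.div_eq_of_lt (by rw [← hdroplen]; exact bitVal_lt _), Nat.add_zero]
  rw [← hvd, bitVal_eq_div hv hmv, bitVal_eq_div hu hmu,
    Nat.div_div_eq_div_mul, ← pow_add]
  congr 2
  omega

def natBits : ℕ → ℕ → List Bool
  | 0, _ => []
  | h + 1, m => natBits h (m / 2) ++ [decide (m % 2 = 1)]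

lemma natBits_length (h m : ℕ) : (natBits h m).length = h := by
  induction h generalizing m with
  | zero => rfl
  | succ h ih => simp [natBits, ih]

lemma bitVal_natBits (h m : ℕ) (hm : m < 2 ^ h) : bitVal (natBits h m) = m := by
  induction h generalizing m with
  | zero => interval_cases m; rfl
  | succ h ih =>
    rw [natBits, bitVal_append_bit, ih (m / 2) (by rw [pow_succ] at hm; omega)]
    rcases Nat.mod_two_eq_zero_or_one m with hp | hp <;> simp [hp] <;> omega

/-- every CP member containing m equals the canonical one; helper for uniqueness. -/
lemma CP_unique {h a b : ℕ} {u v : List Bool} {m : ℕ}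
    (hu : u ∈ CP h a b) (hv : v ∈ CP h a b) (hmu : m ∈ seg h u) (hmv : m ∈ seg h v) :
    u = v := by
  obtain ⟨hul, hus, humin⟩ := hu
  obtain ⟨hvl, hvs, hvmin⟩ := hv
  rcases le_total u.length v.length with hlen | hlen
  · by_contra hne
    exact hvmin u (prefix_of_mem_seg hul hvl hlen hmu hmv) hne hus
  · by_contra hne
    exact humin v (prefix_of_mem_seg hvl hul hlen hmv hmu) (fun e => hne e.symm) hvs

/-- For `a < b ≤ 2^h`, the canonical partition `CP_h(a, b)` is a
partition of `{m : a ≤ m < b}`: the segments of distinct elements of `CP_h(a, b)` are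
disjoint, and every `m` with `a ≤ m < b` lies in `seg_h(u)` for exactly one
`u ∈ CP_h(a, b)`. -/
theorem canonical_partition_is_partition
    (h a b : ℕ) (hab : a < b) (hb : b ≤ 2 ^ h) :
    (∀ u ∈ CP h a b, ∀ v ∈ CP h a b, u ≠ v → seg h u ∩ seg h v = ∅) ∧
    (∀ m : ℕ, a ≤ m → m < b → ∃! u : List Bool, u ∈ CP h a b ∧ m ∈ seg h u) := by
  constructor
  · intro u hu v hv hne
    by_contra hcon
    obtain ⟨m, hmu, hmv⟩ := Set.nonempty_iff_ne_empty.mpr hcon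
    exact hne (CP_unique hu hv hmu hmv)
  · intro m ham hmb
    set w : List Bool := natBits h m with hw
    have hwl : w.length = h := natBits_length h m
    have hwv : bitVal w = m := bitVal_natBits h m (lt_of_lt_of_le hmb hb)
    have hwm : m ∈ seg h w := by
      constructor <;> simp [hwv, hwl]
    have hwsub : seg h w ⊆ Set.Ico a b := by
      intro x hx
      obtain ⟨h1, h2⟩ := hx
      simp [hwv, hwl] at h1 h2
      exact ⟨by omega, by omega⟩
    -- take the shortest prefix whose segment fits
    have hex : ∃ k, seg h (w.take k) ⊆ Set.Ico a b := ⟨h, by rwa [List.take_of_length_le hwl.le]⟩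
    classical
    let k := Nat.find hex
    have hk : seg h (w.take k) ⊆ Set.Ico a b := Nat.find_spec hex
    have hkmin : ∀ j < k, ¬ seg h (w.take j) ⊆ Set.Ico a b := fun j hj => Nat.find_min hex hj
    have hkh : k ≤ h :=
      Nat.find_le (show seg h (w.take h) ⊆ Set.Ico a b by rwa [List.take_of_length_le hwl.le])
    set u := w.take k with hu
    have hul : u.length = k := by rw [hu, List.length_take]; omega
    have huCP : u ∈ CP h a b := by
      refine ⟨by omega, hk, ?_⟩
      intro u' hpre hne
      have : u' = u.take u'.length := List.prefix_iff_eq_take.mp hpre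
      have hlt : u'.length < k := by
        rcases lt_or_eq_of_le (hpre.length_le.trans_eq hul) with hlt | heq
        · exact hlt
        · exfalso; apply hne
          rw [this, heq, ← hul, List.take_length]
      rw [this, hu, List.take_take, min_eq_left hlt.le]
      exact hkmin _ hlt
    have hmu : m ∈ seg h u := seg_subset_of_prefix (hu ▸ List.take_prefix _ _) hwl.le hwm
    exact ⟨u, ⟨huCP, hmu⟩, fun v ⟨hvCP, hmv⟩ => CP_unique hvCP huCP hmv hmu⟩
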